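/- Let H be a separable complex Hilbert space and let P be a bounded idempotent operator on H. Then the operator J' := (2P - I)|2P - I|⁻¹ is a symmetry (i.e. J' = J'* = J'⁻¹), and moreover (2P - I)|2P - I|⁻¹ = (2P* - I)|2P* - I|⁻¹. -/

import Mathlib

open ContinuousLinearMap

variable {H : Type*} [NormedAddCommGroup H] [InnerProductSpace ℂ H]
  [CompleteSpace H] [TopologicalSpace.SeparableSpace H]

/-- The absolute value `|A| = (A*A)^(1/2)` of a bounded operator. -/
noncomputable def absOp (A : H →L[ℂ] H) : H →L[ℂ] H := CFC.sqrt (star A * A)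

/-- A symmetry is a self-adjoint unitary: `J = J* = J⁻¹`. -/
def IsSymmetry (J : H →L[ℂ] H) : Prop := IsSelfAdjoint J ∧ J * J = 1

theorem stmt_1 (P : H →L[ℂ] H) (hP : P * P = P) :
    IsSymmetry (((2 : ℂ) • P - 1) * Ring.inverse (absOp ((2 : ℂ) • P - 1))) ∧
    ((2 : ℂ) • P - 1) * Ring.inverse (absOp ((2 : ℂ) • P - 1)) =
      ((2 : ℂ) • star P - 1) * Ring.inverse (absOp ((2 : ℂ) • star P - 1)) := by
  have hstar2 : ((2:ℂ) • star P - 1 : H →L[ℂ] H) = star ((2:ℂ) • P - 1) := by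
    simp [star_smul]
  rw [hstar2]
  obtain ⟨T, hTdef⟩ : ∃ x : H →L[ℂ] H, x = (2:ℂ) • P - 1 := ⟨_, rfl⟩
  rw [← hTdef]
  simp only [absOp, star_star]
  have hT : T * T = 1 := by
    rw [hTdef]
    simp only [mul_sub, sub_mul, smul_mul_assoc, mul_smul_comm, smul_smul, hP, mul_one, one_mul]
    module
  have hTs : star T * star T = 1 := by rw [← star_mul, hT, star_one]
  obtain ⟨A, hAdef⟩ : ∃ x : H →L[ℂ] H, x = star T * T := ⟨_, rfl⟩
  obtain ⟨A', hA'def⟩ : ∃ x : H →L[ℂ] H, x = T * star T := ⟨_, rfl⟩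
  rw [← hAdef, ← hA'def]
  have hA0 : 0 ≤ A := hAdef ▸ star_mul_self_nonneg T
  have hA'0 : 0 ≤ A' := hA'def ▸ mul_star_self_nonneg T
  have hAA' : A * A' = 1 := by
    have h : A * A' = star T * (T * T) * star T := by rw [hAdef, hA'def]; noncomm_ring
    rw [h, hT, mul_one, hTs]
  have hA'A : A' * A = 1 := by
    have h : A' * A = T * (star T * star T) * T := by rw [hAdef, hA'def]; noncomm_ring
    rw [h, hTs, mul_one, hT]
  obtain ⟨B, hBdef⟩ : ∃ x : H →L[ℂ] H, x = CFC.sqrt A := ⟨_, rfl⟩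
  rw [← hBdef]
  have hB0 : 0 ≤ B := hBdef ▸ CFC.sqrt_nonneg A
  have hBB : B * B = A := by rw [hBdef]; exact CFC.sqrt_mul_sqrt_self A hA0
  obtain ⟨D, hDdef⟩ : ∃ x : H →L[ℂ] H, x = CFC.sqrt B := ⟨_, rfl⟩
  have hD0 : 0 ≤ D := hDdef ▸ CFC.sqrt_nonneg B
  have hDD : D * D = B := by rw [hDdef]; exact CFC.sqrt_mul_sqrt_self B hB0
  have hDsa : IsSelfAdjoint D := hD0.isSelfAdjoint
  have hBA : B * A = A * B := by rw [← hBB]; noncomm_ring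
  have hDB : D * B = B * D := by rw [← hDD]; noncomm_ring
  have hDA : D * A = A * D := by
    rw [← hBB, ← mul_assoc, hDB, mul_assoc, hDB, mul_assoc]
  have hA'B : A' * B = B * A' := by
    calc A' * B = A' * B * (A * A') := by rw [hAA', mul_one]
    _ = A' * (B * A) * A' := by noncomm_ring
    _ = A' * (A * B) * A' := by rw [hBA]
    _ = (A' * A) * (B * A') := by noncomm_ring
    _ = B * A' := by rw [hA'A, one_mul]
  have hA'D : A' * D = D * A' := by
    calc A' * D = A' * D * (A * A') := by rw [hAA', mul_one]
    _ = A' * (D * A) * A' := by noncomm_ring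
    _ = A' * (A * D) * A' := by rw [hDA]
    _ = (A' * A) * (D * A') := by noncomm_ring
    _ = D * A' := by rw [hA'A, one_mul]
  have hTA : T * A = A' * T := by rw [hAdef, hA'def]; noncomm_ring
  have hTsA : star T = A * T := by rw [hAdef, mul_assoc, hT, mul_one]
  have hEsa : star (T * D * T) = T * D * T := by
    have h1 : star (T * D * T) = star T * D * star T := by
      simp only [star_mul, hDsa.star_eq, mul_assoc]
    rw [h1, hTsA]
    calc A * T * D * (A * T)
        = A * (T * (D * A)) * T := by noncomm_ring
      _ = A * (T * (A * D)) * T := by rw [hDA]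
      _ = A * ((T * A) * D) * T := by noncomm_ring
      _ = A * ((A' * T) * D) * T := by rw [hTA]
      _ = (A * A') * (T * D * T) := by noncomm_ring
      _ = T * D * T := by rw [hAA', one_mul]
  have hX0 : 0 ≤ T * B * T := by
    have h2 : star (T * D * T) * (T * D * T) = T * B * T := by
      rw [hEsa]
      calc T * D * T * (T * D * T) = T * D * (T * T) * D * T := by noncomm_ring
        _ = T * (D * D) * T := by rw [hT]; noncomm_ring
        _ = T * B * T := by rw [hDD]
    rw [← h2]; exact star_mul_self_nonneg _
  have hXX : (T * B * T) * (T * B * T) = A' := by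
    calc (T * B * T) * (T * B * T) = T * B * (T * T) * B * T := by noncomm_ring
      _ = T * (B * B) * T := by rw [hT]; noncomm_ring
      _ = (T * A) * T := by rw [hBB]
      _ = A' * (T * T) := by rw [hTA, mul_assoc]
      _ = A' := by rw [hT, mul_one]
  obtain ⟨Binv, hBinvdef⟩ : ∃ x : H →L[ℂ] H, x = A' * B := ⟨_, rfl⟩
  have hBinv2 : Binv * Binv = A' := by
    rw [hBinvdef]
    calc (A' * B) * (A' * B) = A' * (B * A') * B := by noncomm_ring
      _ = A' * (A' * B) * B := by rw [hA'B]
      _ = A' * A' * (B * B) := by noncomm_ring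
      _ = A' * (A' * A) := by rw [hBB, mul_assoc]
      _ = A' := by rw [hA'A, mul_one]
  have hBinv0 : 0 ≤ Binv := by
    have h3 : star D * A' * D = Binv := by
      rw [hBinvdef, hDsa.star_eq, ← hA'D, mul_assoc, hDD]
    rw [← h3]; exact star_left_conjugate_nonneg hA'0 D
  have hs1 : CFC.sqrt A' = Binv := CFC.sqrt_unique hBinv2 hBinv0
  have hs2 : CFC.sqrt A' = T * B * T := CFC.sqrt_unique hXX hX0
  have hTBT : T * B * T = Binv := hs2.symm.trans hs1
  have hBinvB : Binv * B = 1 := by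
    rw [hBinvdef, mul_assoc, hBB, hA'A]
  have hBBinv : B * Binv = 1 := by
    rw [hBinvdef, ← mul_assoc, ← hA'B, mul_assoc, hBB, hA'A]
  have hABinv : A * Binv = B := by
    rw [hBinvdef, ← mul_assoc, hAA', one_mul]
  have hTB : T * B = Binv * T := by
    have h := congrArg (· * T) hTBT
    simpa only [mul_assoc, hT, mul_one] using h
  have hBT : B * T = T * Binv := by
    have h := congrArg (T * ·) hTBT
    simpa only [← mul_assoc, hT, one_mul] using h
  have hBunit : IsUnit B := ⟨⟨B, Binv, hBBinv, hBinvB⟩, rfl⟩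
  have hBinvunit : IsUnit Binv := ⟨⟨Binv, B, hBinvB, hBBinv⟩, rfl⟩
  have hRinvB : Ring.inverse B = Binv := by
    calc Ring.inverse B = Ring.inverse B * (B * Binv) := by rw [hBBinv, mul_one]
      _ = (Ring.inverse B * B) * Binv := by rw [mul_assoc]
      _ = Binv := by rw [Ring.inverse_mul_cancel B hBunit, one_mul]
  have hRinvBinv : Ring.inverse Binv = B := by
    calc Ring.inverse Binv = Ring.inverse Binv * (Binv * B) := by rw [hBinvB, mul_one]
      _ = (Ring.inverse Binv * Binv) * B := by rw [mul_assoc]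
      _ = B := by rw [Ring.inverse_mul_cancel Binv hBinvunit, one_mul]
  rw [hs1, hRinvB, hRinvBinv]
  have hBinvsa : IsSelfAdjoint Binv := hBinv0.isSelfAdjoint
  refine ⟨⟨?_, ?_⟩, ?_⟩
  · show star (T * Binv) = T * Binv
    calc star (T * Binv) = Binv * star T := by rw [star_mul, hBinvsa.star_eq]
      _ = Binv * (A * T) := by rw [← hTsA]
      _ = (Binv * A) * T := by rw [mul_assoc]
      _ = (A' * (B * A)) * T := by rw [hBinvdef]; noncomm_ring
      _ = (A' * (A * B)) * T := by rw [hBA]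
      _ = ((A' * A) * B) * T := by noncomm_ring
      _ = B * T := by rw [hA'A, one_mul]
      _ = T * Binv := hBT
  · calc (T * Binv) * (T * Binv) = (T * Binv) * (B * T) := by rw [hBT]
      _ = T * (Binv * B) * T := by noncomm_ring
      _ = T * T := by rw [hBinvB, mul_one]
      _ = 1 := hT
  · calc T * Binv = B * T := hBT.symm
      _ = (A * Binv) * T := by rw [hABinv]
      _ = A * (Binv * T) := by rw [mul_assoc]
      _ = A * (T * B) := by rw [← hTB]
      _ = (A * T) * B := by rw [mul_assoc]
      _ = star T * B := by rw [← hTsA]
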